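/- arXiv:math/0211468 — 3 statements merged into one kernel-verified Lean document; each statement's English description precedes it below -/
import Mathlib

section
/- For p prime and p ∤ m, there is a ring isomorphism Z[ζ_m] ⊗_Z Z[ζ_p] ≅ Z[ζ_{mp}]. -/
set_option synthInstance.maxHeartbeats 400000
set_option maxHeartbeats 1000000

open NumberField TensorProduct
open Polynomial Algebra Module

theorem aux {a b : ℕ+} {E K : Type*} [Field E] [CharZero E] [Field K] [CharZero K]
    [IsCyclotomicExtension {(a : ℕ)} ℚ E] [IsCyclotomicExtension {((a * b : ℕ+) : ℕ)} ℚ K]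
    (hab : Nat.Coprime a b)
    (ψ : E →ₐ[ℚ] K) {τ : K} (hτ : IsPrimitiveRoot τ (b : ℕ))
    {x : K} (hx : IsIntegral ℤ x) :
    ((b : ℕ) : K) ^ (b : ℕ).totient * x ∈
      Algebra.adjoin ℤ ((Set.range fun z : 𝓞 E => ψ (algebraMap (𝓞 E) E z)) ∪ {τ}) := by
  haveI : NumberField E := IsCyclotomicExtension.numberField {(a : ℕ)} ℚ E
  haveI : NumberField K := IsCyclotomicExtension.numberField {((a * b : ℕ+) : ℕ)} ℚ K
  letI : Algebra E K := ψ.toRingHom.toAlgebra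
  haveI : IsScalarTower ℚ E K := IsScalarTower.of_algebraMap_eq fun r => (ψ.commutes r).symm
  haveI : FiniteDimensional E K := FiniteDimensional.right ℚ E K
  letI : Algebra (𝓞 E) K := (ψ.toRingHom.comp (algebraMap (𝓞 E) E)).toAlgebra
  haveI : IsScalarTower (𝓞 E) E K := IsScalarTower.of_algebraMap_eq fun r => rfl
  haveI : IsScalarTower ℤ (𝓞 E) K := IsScalarTower.of_algebraMap_eq fun r => by
    simp [Algebra.algebraMap_eq_smul_one]
  -- primitive roots
  have hζE := IsCyclotomicExtension.zeta_spec a ℚ E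
  have hσ : IsPrimitiveRoot (algebraMap E K (IsCyclotomicExtension.zeta a ℚ E)) (a : ℕ) :=
    hζE.map_of_injective (algebraMap E K).injective
  have hξ : IsPrimitiveRoot (algebraMap E K (IsCyclotomicExtension.zeta a ℚ E) * τ)
      ((a : ℕ) * (b : ℕ)) := by
    have h := (Commute.all (algebraMap E K (IsCyclotomicExtension.zeta a ℚ E))
      τ).orderOf_mul_eq_mul_orderOf_of_coprime
      (by rw [← hσ.eq_orderOf, ← hτ.eq_orderOf]; exact hab)
    have := IsPrimitiveRoot.orderOf (algebraMap E K (IsCyclotomicExtension.zeta a ℚ E) * τ)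
    rwa [h, ← hσ.eq_orderOf, ← hτ.eq_orderOf] at this
  haveI : IsCyclotomicExtension {(b : ℕ)} E K := by
    refine ⟨fun hn _ => ⟨τ, by rwa [Set.mem_singleton_iff.mp hn]⟩, fun y => ?_⟩
    have htop := IsCyclotomicExtension.adjoin_primitive_root_eq_top (n := ((a * b : ℕ+) : ℕ)) (A := ℚ)
      (by rw [PNat.mul_coe]; exact hξ)
    have hle : adjoin ℚ ({algebraMap E K (IsCyclotomicExtension.zeta a ℚ E) * τ} : Set K) ≤
        Subalgebra.restrictScalars ℚ (adjoin E {w : K | ∃ n : ℕ, n ∈ ({(b : ℕ)} : Set ℕ) ∧ n ≠ 0 ∧ w ^ n = 1}) := by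
      rw [Algebra.adjoin_le_iff, Set.singleton_subset_iff]
      exact mul_mem (Subalgebra.mem_restrictScalars ℚ |>.mpr (Subalgebra.algebraMap_mem _ _))
        (Subalgebra.mem_restrictScalars ℚ |>.mpr (Algebra.subset_adjoin ⟨b, rfl, NeZero.ne _, hτ.pow_eq_one⟩))
    have : y ∈ (⊤ : Subalgebra ℚ K) := trivial
    rw [← htop] at this
    rw [← Subalgebra.mem_restrictScalars ℚ]
    exact hle this
  -- finrank E K = totient b
  have hrank : Module.finrank E K = (b : ℕ).totient := by
    have h1 : Module.finrank ℚ K = ((a * b : ℕ+) : ℕ).totient :=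
      IsCyclotomicExtension.finrank K (Polynomial.cyclotomic.irreducible_rat (a * b).pos)
    have h2 : Module.finrank ℚ E = (a : ℕ).totient :=
      IsCyclotomicExtension.finrank E (Polynomial.cyclotomic.irreducible_rat a.pos)
    have h3 : Module.finrank ℚ E * Module.finrank E K = Module.finrank ℚ K :=
      Module.finrank_mul_finrank ℚ E K
    rw [h1, h2, PNat.mul_coe, Nat.totient_mul hab] at h3
    exact Nat.eq_of_mul_eq_mul_left (Nat.totient_pos.mpr a.pos) h3
  set B := hτ.powerBasis E with hBdef
  have hgen : B.gen = τ := by rw [hBdef, IsPrimitiveRoot.powerBasis_gen]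
  have hτint : IsIntegral ℤ τ := hτ.isIntegral b.pos
  have hmin : minpoly E τ = cyclotomic (b : ℕ) E := by
    have hdeg : (minpoly E τ).natDegree = Module.finrank E K := by
      rw [← hgen, B.natDegree_minpoly, ← B.finrank]
    refine (eq_of_monic_of_dvd_of_natDegree_le (minpoly.monic hτint.tower_top)
      (cyclotomic.monic _ E) (minpoly.dvd E τ ?_) ?_).symm
    · rw [aeval_def, eval₂_eq_eval_map, map_cyclotomic]
      exact hτ.isRoot_cyclotomic b.pos
    · rw [natDegree_cyclotomic, hdeg, hrank]
  -- derivative identity over ℤ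
  obtain ⟨g, hg⟩ := cyclotomic.dvd_X_pow_sub_one (b : ℕ) ℤ
  set u : K := aeval τ (derivative (cyclotomic (b : ℕ) ℤ)) with hu
  set w0 : K := aeval τ g with hw0
  have hcyc0 : aeval τ (cyclotomic (b : ℕ) ℤ) = 0 := by
    rw [aeval_def, eval₂_eq_eval_map, map_cyclotomic]
    exact hτ.isRoot_cyclotomic b.pos
  have hev : u * w0 = ((b : ℕ) : K) * τ ^ ((b : ℕ) - 1) := by
    have hder := congrArg Polynomial.derivative hg
    rw [derivative_mul, derivative_sub, derivative_one, derivative_X_pow, sub_zero] at hder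
    have := congrArg (fun q : Polynomial ℤ => aeval τ q) hder
    simp only [map_add, map_mul, aeval_C, aeval_X_pow, hcyc0, zero_mul, add_zero] at this
    rw [hu, hw0, ← this]
    push_cast
    ring
  have huB : aeval B.gen (derivative (minpoly E B.gen)) = u := by
    rw [hgen, hmin, ← map_cyclotomic_int (b : ℕ) E, show Int.castRingHom E = algebraMap ℤ E from rfl,
      derivative_map, aeval_map_algebraMap]
  -- norms
  set ν : E := Algebra.norm E τ with hν
  have hνb : ν ^ (b : ℕ) = 1 := by rw [hν, ← map_pow, hτ.pow_eq_one, map_one]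
  have hnorm : Algebra.norm E u * Algebra.norm E w0 = ((b : ℕ) : E) ^ Module.finrank E K * ν ^ ((b : ℕ) - 1) := by
    have := congrArg (Algebra.norm E) hev
    rwa [map_mul, map_mul, map_pow, show ((b : ℕ) : K) = algebraMap E K ((b : ℕ) : E) by
      rw [map_natCast], Algebra.norm_algebraMap, ← hν] at this
  set w : E := (-1) ^ (Module.finrank E K * (Module.finrank E K - 1) / 2) * Algebra.norm E w0 * (Algebra.norm E (τ ^ ((b : ℕ) - 1))) ^ ((b : ℕ) - 1)
    with hw
  have hDw : Algebra.discr E B.basis * w = ((b : ℕ) : E) ^ (b : ℕ).totient := by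
    have hD := Algebra.discr_powerBasis_eq_norm E B
    rw [hD, huB, hw, map_pow]
    have hb1 : ((b : ℕ) - 1) + ((b : ℕ) - 1) * ((b : ℕ) - 1) = ((b : ℕ) - 1) * (b : ℕ) := by
      obtain ⟨c, hc⟩ : ∃ c, (b : ℕ) = c + 1 := ⟨(b : ℕ) - 1, (Nat.succ_pred_eq_of_pos b.pos).symm⟩
      rw [hc]
      simp only [Nat.add_sub_cancel]
      ring
    calc (-1 : E) ^ (Module.finrank E K * (Module.finrank E K - 1) / 2) * Algebra.norm E u * ((-1) ^ (Module.finrank E K * (Module.finrank E K - 1) / 2) * Algebra.norm E w0 *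
          (ν ^ ((b : ℕ) - 1)) ^ ((b : ℕ) - 1))
        = ((-1 : E) * -1) ^ (Module.finrank E K * (Module.finrank E K - 1) / 2) * (Algebra.norm E u * Algebra.norm E w0) *
          ν ^ (((b : ℕ) - 1) * ((b : ℕ) - 1)) := by rw [mul_pow, ← pow_mul]; ring
      _ = ((b : ℕ) : E) ^ Module.finrank E K * ν ^ (((b : ℕ) - 1) + ((b : ℕ) - 1) * ((b : ℕ) - 1)) := by
          rw [hnorm, neg_mul_neg, one_mul, one_pow, pow_add]; ring
      _ = ((b : ℕ) : E) ^ Module.finrank E K * (ν ^ (b : ℕ)) ^ ((b : ℕ) - 1) := by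
          rw [hb1, ← pow_mul, Nat.mul_comm]
      _ = ((b : ℕ) : E) ^ (b : ℕ).totient := by rw [hνb, one_pow, mul_one, hrank]
  -- integrality of w
  have hw0int : IsIntegral ℤ w0 := by
    have : w0 ∈ integralClosure ℤ K := by
      apply adjoin_le_integralClosure hτint
      rw [Algebra.adjoin_singleton_eq_range_aeval]
      exact ⟨g, rfl⟩
    exact this
  have hwint : IsIntegral ℤ w := by
    refine (((((isIntegral_one : IsIntegral ℤ (1:E))).neg).pow _).mul
      (Algebra.isIntegral_norm E hw0int)).mul ?_
    exact (Algebra.isIntegral_norm E (hτint.pow _)).pow _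
  -- the key step
  have hBint : IsIntegral (𝓞 E) B.gen := by rw [hgen]; exact hτint.tower_top
  have hxint : IsIntegral (𝓞 E) x := hx.tower_top
  have key := Algebra.discr_mul_isIntegral_mem_adjoin (K := E) (R := 𝓞 E) hBint hxint
  rw [hgen] at key
  -- conclude
  have hmem : ((b : ℕ) : K) ^ (b : ℕ).totient * x ∈ adjoin (𝓞 E) ({τ} : Set K) := by
    have : ((b : ℕ) : K) ^ (b : ℕ).totient * x
        = (Algebra.discr E B.basis • x) * algebraMap E K w := by
      rw [Algebra.smul_def, mul_comm (algebraMap E K (Algebra.discr E B.basis)) x, mul_assoc,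
        ← map_mul, hDw, map_pow, map_natCast]
      ring
    rw [this]
    exact mul_mem key (Subalgebra.algebraMap_mem (adjoin (𝓞 E) ({τ} : Set K)) ⟨w, hwint⟩)
  refine Algebra.adjoin_induction (fun z hz => ?_) (fun r => ?_)
    (fun z1 z2 _ _ h1 h2 => add_mem h1 h2) (fun z1 z2 _ _ h1 h2 => mul_mem h1 h2) hmem
  · exact Algebra.subset_adjoin (Set.mem_union_right _ hz)
  · exact Algebra.subset_adjoin (Set.mem_union_left _ ⟨r, rfl⟩)

/-- For `p` prime not dividing `m`, `ℤ[ζ_m] ⊗_ℤ ℤ[ζ_p] ≅ ℤ[ζ_{mp}]`. -/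
theorem stmt_6 (m p : ℕ+) (hp : (p : ℕ).Prime) (hpm : ¬ (p : ℕ) ∣ (m : ℕ))
    (K L M : Type*) [Field K] [CharZero K] [Field L] [CharZero L]
    [Field M] [CharZero M]
    [IsCyclotomicExtension {((m * p : ℕ+) : ℕ)} ℚ K] [IsCyclotomicExtension {(m : ℕ)} ℚ L]
    [IsCyclotomicExtension {(p : ℕ)} ℚ M] :
    Nonempty ((𝓞 L ⊗[ℤ] 𝓞 M) ≃+* 𝓞 K) := by
  haveI : NumberField K := IsCyclotomicExtension.numberField ({((m * p : ℕ+) : ℕ)} : Set ℕ) ℚ K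
  haveI : NumberField L := IsCyclotomicExtension.numberField ({(m : ℕ)} : Set ℕ) ℚ L
  haveI : NumberField M := IsCyclotomicExtension.numberField ({(p : ℕ)} : Set ℕ) ℚ M
  have hpc : ((p : ℕ)).Coprime (m : ℕ) := (Nat.Prime.coprime_iff_not_dvd hp).mpr hpm
  have hmc : ((m : ℕ)).Coprime (p : ℕ) := hpc.symm
  -- the embeddings
  haveI := IsCyclotomicExtension.splitting_field_cyclotomic (n := (m : ℕ)) ℚ L
  haveI := IsCyclotomicExtension.splitting_field_cyclotomic (n := (p : ℕ)) ℚ M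
  have hXmp : Polynomial.Splits ((Polynomial.X ^ ((m * p : ℕ+) : ℕ) - 1 : Polynomial ℚ).map (algebraMap ℚ K)) :=
    IsCyclotomicExtension.splits_X_pow_sub_one ℚ K (Set.mem_singleton _)
  have hdvd1 : (Polynomial.X ^ (m : ℕ) - 1 : Polynomial ℚ) ∣
      Polynomial.X ^ ((m * p : ℕ+) : ℕ) - 1 := by
    have := sub_dvd_pow_sub_pow ((Polynomial.X : Polynomial ℚ) ^ (m : ℕ)) 1 (p : ℕ)
    rwa [one_pow, ← pow_mul, ← PNat.mul_coe] at this
  have hdvd2 : (Polynomial.X ^ (p : ℕ) - 1 : Polynomial ℚ) ∣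
      Polynomial.X ^ ((m * p : ℕ+) : ℕ) - 1 := by
    have := sub_dvd_pow_sub_pow ((Polynomial.X : Polynomial ℚ) ^ (p : ℕ)) 1 (m : ℕ)
    rwa [one_pow, ← pow_mul, mul_comm (p : ℕ), ← PNat.mul_coe] at this
  have hXne : (Polynomial.X ^ ((m * p : ℕ+) : ℕ) - 1 : Polynomial ℚ) ≠ 0 := by
    simpa using Polynomial.X_pow_sub_C_ne_zero (m * p).pos (1 : ℚ)
  have hsplL : Polynomial.Splits ((cyclotomic (m : ℕ) ℚ).map (algebraMap ℚ K)) :=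
    Polynomial.Splits.of_dvd hXmp (Polynomial.map_ne_zero hXne)
      (Polynomial.map_dvd _ ((cyclotomic.dvd_X_pow_sub_one _ _).trans hdvd1))
  have hsplM : Polynomial.Splits ((cyclotomic (p : ℕ) ℚ).map (algebraMap ℚ K)) :=
    Polynomial.Splits.of_dvd hXmp (Polynomial.map_ne_zero hXne)
      (Polynomial.map_dvd _ ((cyclotomic.dvd_X_pow_sub_one _ _).trans hdvd2))
  let ψL : L →ₐ[ℚ] K := Polynomial.IsSplittingField.lift L (cyclotomic (m : ℕ) ℚ) hsplL
  let ψM : M →ₐ[ℚ] K := Polynomial.IsSplittingField.lift M (cyclotomic (p : ℕ) ℚ) hsplM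
  let fL : 𝓞 L →+* 𝓞 K := RingOfIntegers.mapRingHom ψL
  let fM : 𝓞 M →+* 𝓞 K := RingOfIntegers.mapRingHom ψM
  let φ : (𝓞 L ⊗[ℤ] 𝓞 M) →ₐ[ℤ] 𝓞 K :=
    Algebra.TensorProduct.productMap fL.toIntAlgHom fM.toIntAlgHom
  -- surjectivity
  have hsurj : Function.Surjective φ := by
    intro x
    haveI : IsCyclotomicExtension {((p * m : ℕ+) : ℕ)} ℚ K :=
      mul_comm m p ▸ inferInstanceAs (IsCyclotomicExtension {((m * p : ℕ+) : ℕ)} ℚ K)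
    have hζL := IsCyclotomicExtension.zeta_spec m ℚ L
    have hζM := IsCyclotomicExtension.zeta_spec p ℚ M
    have hη : IsPrimitiveRoot (ψL (IsCyclotomicExtension.zeta m ℚ L)) (m : ℕ) :=
      hζL.map_of_injective ψL.injective
    have hθ : IsPrimitiveRoot (ψM (IsCyclotomicExtension.zeta p ℚ M)) (p : ℕ) :=
      hζM.map_of_injective ψM.injective
    have hxint : IsIntegral ℤ (x : K) := x.isIntegral_coe
    set T : Subalgebra ℤ K := Algebra.adjoin ℤ
      ((Set.range fun z : 𝓞 L => ψL (algebraMap (𝓞 L) L z)) ∪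
       (Set.range fun z : 𝓞 M => ψM (algebraMap (𝓞 M) M z))) with hT
    have h1 : ((m : ℕ) : K) ^ (m : ℕ).totient * x ∈ T := by
      have := aux (a := p) (b := m) (E := M) (K := K) hpc ψM hη hxint
      refine Algebra.adjoin_le ?_ this
      rintro y (⟨z, rfl⟩ | hy)
      · exact Algebra.subset_adjoin (Set.mem_union_right _ ⟨z, rfl⟩)
      · rw [Set.mem_singleton_iff] at hy
        subst hy
        exact Algebra.subset_adjoin (Set.mem_union_left _
          ⟨hζL.toInteger, rfl⟩)
    have h2 : ((p : ℕ) : K) ^ (p : ℕ).totient * x ∈ T := by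
      have := aux (a := m) (b := p) (E := L) (K := K) hmc ψL hθ hxint
      refine Algebra.adjoin_le ?_ this
      rintro y (⟨z, rfl⟩ | hy)
      · exact Algebra.subset_adjoin (Set.mem_union_left _ ⟨z, rfl⟩)
      · rw [Set.mem_singleton_iff] at hy
        subst hy
        exact Algebra.subset_adjoin (Set.mem_union_right _
          ⟨hζM.toInteger, rfl⟩)
    have hco : IsCoprime (((m : ℕ) ^ (m : ℕ).totient : ℕ) : ℤ)
        (((p : ℕ) ^ (p : ℕ).totient : ℕ) : ℤ) :=
      Nat.isCoprime_iff_coprime.mpr (Nat.Coprime.pow _ _ hmc)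
    obtain ⟨u, v, huv⟩ := hco
    have hxT : (x : K) ∈ T := by
      have h1' := T.zsmul_mem h1 u
      have h2' := T.zsmul_mem h2 v
      have hsum := T.add_mem h1' h2'
      have heq : u • (((m : ℕ) : K) ^ (m : ℕ).totient * x) +
          v • (((p : ℕ) : K) ^ (p : ℕ).totient * x) = (x : K) := by
        have hc : ((u * ((m : ℕ) ^ (m : ℕ).totient : ℕ) +
            v * ((p : ℕ) ^ (p : ℕ).totient : ℕ) : ℤ) : K) = 1 := by
          rw [huv]; norm_num
        simp only [zsmul_eq_mul]
        push_cast at hc ⊢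
        linear_combination (x : K) * hc
      rwa [heq] at hsum
    -- transfer back to 𝓞 K
    let ι : 𝓞 K →ₐ[ℤ] K := IsScalarTower.toAlgHom ℤ (𝓞 K) K
    have hTle : T ≤ φ.range.map ι := by
      refine Algebra.adjoin_le ?_
      rintro y (⟨z, rfl⟩ | ⟨z, rfl⟩)
      · exact ⟨φ (z ⊗ₜ 1), ⟨z ⊗ₜ 1, rfl⟩, by simp only [φ, ι]; rw [Algebra.TensorProduct.productMap_apply_tmul, map_one, mul_one]; rfl⟩
      · exact ⟨φ (1 ⊗ₜ z), ⟨1 ⊗ₜ z, rfl⟩, by simp only [φ, ι]; rw [Algebra.TensorProduct.productMap_apply_tmul, map_one, one_mul]; rfl⟩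
    obtain ⟨w, hw, hwx⟩ := hTle hxT
    obtain ⟨t, rfl⟩ := hw
    exact ⟨t, RingOfIntegers.coe_injective hwx⟩
  -- injectivity via rank
  have hrk : Module.finrank ℤ (𝓞 L ⊗[ℤ] 𝓞 M) = Module.finrank ℤ (𝓞 K) := by
    erw [Module.finrank_tensorProduct]
    rw [RingOfIntegers.rank, RingOfIntegers.rank,
      RingOfIntegers.rank, IsCyclotomicExtension.finrank L (cyclotomic.irreducible_rat m.pos),
      IsCyclotomicExtension.finrank M (cyclotomic.irreducible_rat p.pos),
      IsCyclotomicExtension.finrank K (cyclotomic.irreducible_rat (m * p).pos),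
      PNat.mul_coe, Nat.totient_mul hmc]
  haveI : Module.Free ℤ (𝓞 L ⊗[ℤ] 𝓞 M) := Module.Free.tensor
  haveI : Module.Finite ℤ (𝓞 L ⊗[ℤ] 𝓞 M) := Module.Finite.tensorProduct _ _ _
  let bT := Module.Free.chooseBasis ℤ (𝓞 L ⊗[ℤ] 𝓞 M)
  let bK := Module.Free.chooseBasis ℤ (𝓞 K)
  have hcard : Fintype.card (Module.Free.ChooseBasisIndex ℤ (𝓞 K)) =
      Fintype.card (Module.Free.ChooseBasisIndex ℤ (𝓞 L ⊗[ℤ] 𝓞 M)) := by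
    rw [← Module.finrank_eq_card_chooseBasisIndex, ← Module.finrank_eq_card_chooseBasisIndex, hrk]
  let eLM : 𝓞 K ≃ₗ[ℤ] (𝓞 L ⊗[ℤ] 𝓞 M) := bK.equiv bT (Fintype.equivOfCardEq hcard)
  have hinj : Function.Injective φ := by
    have hend : Function.Surjective (eLM.toLinearMap ∘ₗ φ.toLinearMap) :=
      eLM.surjective.comp hsurj
    have := OrzechProperty.injective_of_surjective_endomorphism
      (eLM.toLinearMap ∘ₗ φ.toLinearMap) hend
    intro x y hxy
    apply this
    exact congrArg eLM hxy
  exact ⟨RingEquiv.ofBijective φ ⟨hinj, hsurj⟩⟩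
end

section
/- Let ζ = ζ_{mp} with p prime, p ∤ m, and I = (1 − ζ^m). Then for integers a, a', ζ^a ≡ ζ^{a'} mod I if and only if a ≡ a' (mod m). -/
set_option synthInstance.maxHeartbeats 400000

open NumberField

section Aux

variable {R : Type*} [CommRing R]

lemma aux_one_sub_dvd (x : R) (t : ℕ) : (1 - x) ∣ (1 - x ^ t) := by
  simpa using sub_dvd_pow_sub_pow (1 : R) x t

lemma aux_one_sub_dvd_natCast [IsDomain R] {θ : R} {q : ℕ} (hθ : IsPrimitiveRoot θ q)
    (hq : 1 < q) : (1 - θ) ∣ (q : R) := by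
  have h0 : (q : R) = ∑ i ∈ Finset.range q, (1 - θ ^ i) := by
    rw [Finset.sum_sub_distrib, hθ.geom_sum_eq_zero hq]
    simp
  rw [h0]
  exact Finset.dvd_sum fun i _ => aux_one_sub_dvd θ i

lemma aux_not_unit_natCast (K : Type*) [Field K] [CharZero K] [NumberField K]
    {p : ℕ} (hp : 1 < p) : ¬ IsUnit ((p : 𝓞 K)) := by
  intro h
  have h1 : ((p : 𝓞 K)) = algebraMap (𝓞 ℚ) (𝓞 K) (p : 𝓞 ℚ) := by
    simp [map_natCast]
  rw [h1, ← RingOfIntegers.isUnit_norm ℚ, RingOfIntegers.norm_algebraMap] at h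
  have h2 : IsUnit ((p : 𝓞 ℚ)) :=
    (isUnit_pow_iff Module.finrank_pos.ne').mp h
  have h3 : IsUnit ((p : ℤ)) := by
    have := h2.map Rat.ringOfIntegersEquiv
    simpa [map_natCast] using this
  rcases Int.isUnit_iff.mp h3 with h4 | h4 <;> omega

end Aux

lemma aux_key (m p : ℕ+) (hp : (p : ℕ).Prime) (hpm : ¬ (p : ℕ) ∣ (m : ℕ))
    (K : Type*) [Field K] [CharZero K] [IsCyclotomicExtension {((m * p : ℕ+) : ℕ)} ℚ K]
    (ζ : 𝓞 K) (hζ : IsPrimitiveRoot ζ ((m : ℕ) * (p : ℕ))) (k : ℕ) :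
    ζ ^ k - 1 ∈ Ideal.span {1 - ζ ^ (m : ℕ)} ↔ (m : ℕ) ∣ k := by
  haveI : NumberField K := IsCyclotomicExtension.numberField {((m * p : ℕ+) : ℕ)} ℚ K
  have hmp0 : 0 < (m : ℕ) * (p : ℕ) := Nat.mul_pos m.pos p.pos
  set I := Ideal.span {1 - ζ ^ (m : ℕ)} with hI
  have hgen : (1 - ζ ^ (m : ℕ)) ∈ I := Ideal.subset_span rfl
  constructor
  · intro hk
    -- the primitive p-th root ζ^m
    have hζm : IsPrimitiveRoot (ζ ^ (m : ℕ)) (p : ℕ) := hζ.pow hmp0 rfl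
    -- p ∈ I
    have hpI : ((p : ℕ) : 𝓞 K) ∈ I := by
      obtain ⟨c, hc⟩ := aux_one_sub_dvd_natCast hζm hp.one_lt
      rw [hc]; exact I.mul_mem_right _ hgen
    -- the subgroup trick
    have hζu : IsUnit ζ := hζ.isUnit hmp0.ne'
    set u := hζu.unit with hu
    have huζ : (u : 𝓞 K) = ζ := rfl
    let S : AddSubgroup ℤ :=
      { carrier := {j : ℤ | ((u ^ j : (𝓞 K)ˣ) : 𝓞 K) - 1 ∈ I}
        zero_mem' := by simp
        add_mem' := by
          intro j1 j2 h1 h2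
          have he : ((u ^ (j1 + j2) : (𝓞 K)ˣ) : 𝓞 K) - 1 =
              ((u ^ j1 : (𝓞 K)ˣ) : 𝓞 K) * (((u ^ j2 : (𝓞 K)ˣ) : 𝓞 K) - 1) +
                (((u ^ j1 : (𝓞 K)ˣ) : 𝓞 K) - 1) := by
            rw [zpow_add]; push_cast; ring
          simp only [Set.mem_setOf_eq] at *
          rw [he]
          exact I.add_mem (I.mul_mem_left _ h2) h1
        neg_mem' := by
          intro j h
          simp only [Set.mem_setOf_eq] at *
          have hinv : ((u ^ (-j) : (𝓞 K)ˣ) : 𝓞 K) * ((u ^ j : (𝓞 K)ˣ) : 𝓞 K) = 1 := by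
            rw [← Units.val_mul, ← zpow_add, neg_add_cancel, zpow_zero, Units.val_one]
          have he : ((u ^ (-j) : (𝓞 K)ˣ) : 𝓞 K) - 1 =
              -(((u ^ (-j) : (𝓞 K)ˣ) : 𝓞 K) * (((u ^ j : (𝓞 K)ˣ) : 𝓞 K) - 1)) := by
            rw [mul_sub, hinv]; ring
          rw [he]
          exact I.neg_mem (I.mul_mem_left _ h) }
    have hmem : ∀ j : ℕ, (j : ℤ) ∈ S ↔ ζ ^ j - 1 ∈ I := by
      intro j
      have : ((u ^ (j : ℤ) : (𝓞 K)ˣ) : 𝓞 K) = ζ ^ j := by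
        rw [zpow_natCast, Units.val_pow_eq_pow_val, huζ]
      show ((u ^ (j : ℤ) : (𝓞 K)ˣ) : 𝓞 K) - 1 ∈ I ↔ _
      rw [this]
    have hmS : ((m : ℕ) : ℤ) ∈ S := by
      rw [hmem]
      have : ζ ^ (m : ℕ) - 1 = -(1 - ζ ^ (m : ℕ)) := by ring
      rw [this]; exact I.neg_mem hgen
    have hkS : ((k : ℕ) : ℤ) ∈ S := by rw [hmem]; exact hk
    -- gcd
    set g := Nat.gcd (m : ℕ) k with hgdef
    have hgS : ((g : ℕ) : ℤ) ∈ S := by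
      rw [Nat.gcd_eq_gcd_ab]
      have h1 : ((m : ℕ) : ℤ) * Nat.gcdA (m : ℕ) k ∈ S := by
        have := S.zsmul_mem hmS (Nat.gcdA (m : ℕ) k)
        simpa [smul_eq_mul, mul_comm] using this
      have h2 : ((k : ℕ) : ℤ) * Nat.gcdB (m : ℕ) k ∈ S := by
        have := S.zsmul_mem hkS (Nat.gcdB (m : ℕ) k)
        simpa [smul_eq_mul, mul_comm] using this
      exact S.add_mem h1 h2
    have hgI : ζ ^ g - 1 ∈ I := (hmem g).mp hgS
    -- show g = m
    have hgm : g ∣ (m : ℕ) := Nat.gcd_dvd_left _ _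
    by_contra hmk
    have hgne : g ≠ (m : ℕ) := by
      intro h; exact hmk (h ▸ Nat.gcd_dvd_right (m : ℕ) k)
    obtain ⟨r, hr⟩ := hgm
    have hg0 : 0 < g := Nat.gcd_pos_of_pos_left _ m.pos
    have hr1 : 1 < r := by
      have hrne0 : r ≠ 0 := by rintro rfl; have := m.pos; omega
      have hrne1 : r ≠ 1 := by rintro rfl; rw [mul_one] at hr; exact hgne hr.symm
      omega
    set q := r.minFac with hqdef
    have hq : q.Prime := Nat.minFac_prime (by omega)
    have hqr : q ∣ r := Nat.minFac_dvd r
    -- ζ^g is primitive (r*p)-th root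
    have hζg : IsPrimitiveRoot (ζ ^ g) (r * (p : ℕ)) := by
      refine hζ.pow hmp0 ?_
      rw [hr]; ring
    -- θ primitive q-th root
    have hqrp : q ∣ r * (p : ℕ) := hqr.mul_right _
    have hθ : IsPrimitiveRoot ((ζ ^ g) ^ (r * (p : ℕ) / q)) q := by
      refine hζg.pow (Nat.mul_pos (by omega) p.pos) ?_
      rw [Nat.div_mul_cancel hqrp]
    -- q ∈ I
    have hqI : ((q : ℕ) : 𝓞 K) ∈ I := by
      obtain ⟨c, hc⟩ := aux_one_sub_dvd_natCast hθ hq.one_lt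
      obtain ⟨d, hd⟩ := aux_one_sub_dvd (ζ ^ g) (r * (p : ℕ) / q)
      have h1 : (1 - ζ ^ g) ∈ I := by
        have : (1 : 𝓞 K) - ζ ^ g = -(ζ ^ g - 1) := by ring
        rw [this]; exact I.neg_mem hgI
      rw [hc, hd]
      exact I.mul_mem_right _ (I.mul_mem_right _ h1)
    -- q ≠ p
    have hqp : q ≠ (p : ℕ) := by
      intro h
      exact hpm (h ▸ hqr.trans ⟨g, by rw [hr]; ring⟩)
    -- 1 ∈ I
    have hone : (1 : 𝓞 K) ∈ I := by
      have hcop : Nat.Coprime (p : ℕ) q := (Nat.coprime_primes hp hq).mpr (Ne.symm hqp)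
      have hbez : (1 : ℤ) = (p : ℕ) * Nat.gcdA (p : ℕ) q + q * Nat.gcdB (p : ℕ) q := by
        have := Nat.gcd_eq_gcd_ab (p : ℕ) q
        rwa [hcop] at this
      have : (1 : 𝓞 K) = ((p : ℕ) : 𝓞 K) * ((Nat.gcdA (p : ℕ) q : ℤ) : 𝓞 K) +
          ((q : ℕ) : 𝓞 K) * ((Nat.gcdB (p : ℕ) q : ℤ) : 𝓞 K) := by
        have := congrArg (fun z : ℤ => ((z : 𝓞 K))) hbez
        push_cast at this ⊢
        exact this
      rw [this]
      exact I.add_mem (I.mul_mem_right _ hpI) (I.mul_mem_right _ hqI)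
    -- hence 1 - ζ^m is a unit
    have hunit : IsUnit (1 - ζ ^ (m : ℕ)) := by
      have := Ideal.mem_span_singleton.mp hone
      exact isUnit_of_dvd_one this
    -- hence p is a unit, contradiction
    haveI : Fact ((p : ℕ)).Prime := ⟨hp⟩
    have hprod : (((p : ℕ) : 𝓞 K)) =
        ∏ μ ∈ primitiveRoots (p : ℕ) (𝓞 K), (1 - μ) := by
      have h1 := Polynomial.eval_one_cyclotomic_prime (R := 𝓞 K) (p := (p : ℕ))
      rw [Polynomial.cyclotomic_eq_prod_X_sub_primitiveRoots hζm] at h1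
      rw [← h1]
      simp [Polynomial.eval_prod]
    have hpunit : IsUnit (((p : ℕ) : 𝓞 K)) := by
      rw [hprod]
      refine Finset.prod_induction _ IsUnit (fun a b ha hb => ha.mul hb) isUnit_one ?_
      intro μ hμ
      haveI : NeZero (p : ℕ) := ⟨hp.ne_zero⟩
      have hμp : IsPrimitiveRoot μ (p : ℕ) :=
        (mem_primitiveRoots p.pos).mp hμ
      obtain ⟨i, _, hi⟩ := hμp.eq_pow_of_pow_eq_one hζm.pow_eq_one
      have : (1 - μ) ∣ (1 - ζ ^ (m : ℕ)) := hi ▸ aux_one_sub_dvd μ i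
      exact isUnit_of_dvd_unit this hunit
    exact aux_not_unit_natCast K hp.one_lt hpunit
  · rintro ⟨t, rfl⟩
    rw [Ideal.mem_span_singleton]
    have : ζ ^ ((m : ℕ) * t) - 1 = -(1 - (ζ ^ (m : ℕ)) ^ t) := by rw [pow_mul]; ring
    rw [this]
    exact (aux_one_sub_dvd _ t).neg_right

/-- For `ζ = ζ_{mp}` with `p` prime, `p ∤ m`, and `I = (1 - ζ^m)`:
`ζ^a ≡ ζ^{a'} mod I` iff `a ≡ a' (mod m)`. -/
theorem stmt_12 (m p : ℕ+) (hp : (p : ℕ).Prime) (hpm : ¬ (p : ℕ) ∣ (m : ℕ))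
    (K : Type*) [Field K] [CharZero K] [IsCyclotomicExtension {((m * p : ℕ+) : ℕ)} ℚ K]
    (ζ : 𝓞 K) (hζ : IsPrimitiveRoot ζ ((m : ℕ) * (p : ℕ))) (a a' : ℕ) :
    ζ ^ a - ζ ^ a' ∈ Ideal.span {1 - ζ ^ (m : ℕ)} ↔ a ≡ a' [MOD (m : ℕ)] := by
  have hmp0 : 0 < (m : ℕ) * (p : ℕ) := Nat.mul_pos m.pos p.pos
  have hζu : IsUnit ζ := hζ.isUnit hmp0.ne'
  have key : ∀ b b' : ℕ, b' ≤ b →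
      (ζ ^ b - ζ ^ b' ∈ Ideal.span {1 - ζ ^ (m : ℕ)} ↔ b ≡ b' [MOD (m : ℕ)]) := by
    intro b b' hbb
    have hsplit : ζ ^ b - ζ ^ b' = ζ ^ b' * (ζ ^ (b - b') - 1) := by
      rw [mul_sub, mul_one, ← pow_add]
      congr 2
      omega
    rw [hsplit, Ideal.unit_mul_mem_iff_mem _ (hζu.pow b'),
      aux_key m p hp hpm K ζ hζ (b - b')]
    rw [Nat.ModEq.comm (n := (m : ℕ)) (a := b) (b := b')]
    exact (Nat.modEq_iff_dvd' hbb).symm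
  rcases le_total a' a with h | h
  · exact key a a' h
  · have h1 := key a' a h
    constructor
    · intro hm
      have : ζ ^ a' - ζ ^ a ∈ Ideal.span {1 - ζ ^ (m : ℕ)} := by
        have he : ζ ^ a' - ζ ^ a = -(ζ ^ a - ζ ^ a') := by ring
        rw [he]; exact neg_mem hm
      exact (h1.mp this).symm
    · intro hm
      have := h1.mpr hm.symm
      have he : ζ ^ a - ζ ^ a' = -(ζ ^ a' - ζ ^ a) := by ring
      rw [he]; exact neg_mem this
end

section
/- Let m = q^i with q an odd prime, p an odd prime with p ∤ m, ζ = ζ_{mp}, and I = (1 − ζ^m). For d = pq^j with 1 ≤ j ≤ i and a, a' coprime to d: (1 − ζ_d^a) ≡ (1 − ζ_d^{a'}) mod I if and only if a ≡ a' (mod q^j), where ζ_d = ζ^{mp/d} = ζ^{q^{i−j}}. -/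
set_option synthInstance.maxHeartbeats 400000
set_option maxHeartbeats 1600000

open NumberField

/-- For `m = q^i` (`q` odd prime), `p` an odd prime with `p ∤ m`,
`ζ = ζ_{mp}`, `I = (1 - ζ^m)`, `d = p*q^j` with `1 ≤ j ≤ i`, and `a, a'`
coprime to `d`: `1 - ζ_d^a ≡ 1 - ζ_d^{a'} mod I` iff `a ≡ a' (mod q^j)`,
where `ζ_d = ζ^{q^{i-j}}`. -/
theorem stmt_13 (q i j p : ℕ) (hq : q.Prime) (hqodd : q ≠ 2) (hp : p.Prime)
    (hpodd : p ≠ 2) (hpm : ¬ p ∣ q ^ i) (hj : 1 ≤ j) (hji : j ≤ i)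
    (K : Type*) [Field K] [CharZero K]
    [IsCyclotomicExtension {q ^ i * p} ℚ K]
    (ζ : 𝓞 K) (hζ : IsPrimitiveRoot ζ (q ^ i * p))
    (a a' : ℕ) (ha : Nat.Coprime a (p * q ^ j)) (ha' : Nat.Coprime a' (p * q ^ j)) :
    (1 - (ζ ^ q ^ (i - j)) ^ a) - (1 - (ζ ^ q ^ (i - j)) ^ a')
        ∈ Ideal.span {1 - ζ ^ q ^ i} ↔ a ≡ a' [MOD q ^ j] := by
  classical
  open Polynomial in
  have hipos : 1 ≤ i := hj.trans hji
  have hpq : p ≠ q := by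
    rintro rfl
    exact hpm (dvd_pow_self p (by omega))
  have hn0 : 0 < q ^ i * p := Nat.mul_pos (pow_pos hq.pos i) hp.pos
  haveI hfact : Fact p.Prime := ⟨hp⟩
  haveI : NeZero p := ⟨hp.pos.ne'⟩
  haveI : NumberField K :=
    IsCyclotomicExtension.numberField
      {q ^ i * p} ℚ K
  set I : Ideal (𝓞 K) := Ideal.span {1 - ζ ^ q ^ i} with hIdef
  have hρ : IsPrimitiveRoot (ζ ^ q ^ i) p := hζ.pow hn0 rfl
  have hiqp : q ^ i * p = q ^ (i - 1) * (q * p) := by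
    rw [← mul_assoc, ← pow_succ, Nat.sub_add_cancel hipos]
  have hη : IsPrimitiveRoot (ζ ^ q ^ (i - 1)) (q * p) := hζ.pow hn0 hiqp
  -- `1 - ζ^{q^i}` is not a unit
  have hNP : ¬ IsUnit (1 - ζ ^ q ^ i) := by
    intro hu
    have hcyc : Polynomial.cyclotomic p (𝓞 K) =
        ∏ μ ∈ primitiveRoots p (𝓞 K), (X - C μ) :=
      cyclotomic_eq_prod_X_sub_primitiveRoots hρ
    have hpprod : ((p : ℕ) : 𝓞 K) = ∏ μ ∈ primitiveRoots p (𝓞 K), (1 - μ) := by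
      have h1 := Polynomial.eval_one_cyclotomic_prime (R := 𝓞 K) (p := p)
      rw [hcyc] at h1
      simpa [Polynomial.eval_prod] using h1.symm
    have hpunit : IsUnit ((p : ℕ) : 𝓞 K) := by
      rw [hpprod]
      refine Finset.prod_induction _ IsUnit (fun x y hx hy => hx.mul hy) isUnit_one ?_
      intro μ hμ
      have hμ' : IsPrimitiveRoot μ p := (mem_primitiveRoots hp.pos).1 hμ
      obtain ⟨k, -, hk⟩ := hμ'.eq_pow_of_pow_eq_one hρ.pow_eq_one
      have hdvd : (1 - μ) ∣ (1 - ζ ^ q ^ i) := by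
        have := Polynomial.sub_dvd_eval_sub 1 μ (X ^ k : (𝓞 K)[X])
        simpa [hk] using this
      exact isUnit_of_dvd_unit hdvd hu
    -- contradiction via the norm
    have hmap : ((p : ℕ) : 𝓞 K) = algebraMap (𝓞 ℚ) (𝓞 K) ((p : ℕ) : 𝓞 ℚ) := by
      simp
    rw [hmap] at hpunit
    have h2 : IsUnit (RingOfIntegers.norm ℚ (algebraMap (𝓞 ℚ) (𝓞 K) ((p : ℕ) : 𝓞 ℚ))) :=
      (RingOfIntegers.isUnit_norm ℚ).2 hpunit
    rw [RingOfIntegers.norm_algebraMap, Rat.RingOfIntegers.isUnit_iff] at h2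
    have hcoe : ((((p : ℕ) : 𝓞 ℚ) ^ Module.finrank ℚ K : 𝓞 ℚ) : ℚ)
        = ((p : ℚ)) ^ Module.finrank ℚ K := by
      push_cast
      rfl
    have hd : 0 < Module.finrank ℚ K := Module.finrank_pos
    have hp2 : (2 : ℚ) ≤ (p : ℚ) := by exact_mod_cast hp.two_le
    have hgt : 1 < ((p : ℚ)) ^ Module.finrank ℚ K :=
      one_lt_pow₀ (by linarith) hd.ne'
    rw [hcoe] at h2
    rcases h2 with h2 | h2 <;> rw [h2] at hgt <;> linarith
  have hInt : I ≠ ⊤ := by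
    rw [hIdef, Ne, Ideal.span_singleton_eq_top]
    exact hNP
  haveI : Nontrivial (𝓞 K ⧸ I) := Ideal.Quotient.nontrivial_iff.mpr hInt
  set f : 𝓞 K →+* 𝓞 K ⧸ I := Ideal.Quotient.mk I with hfdef
  have hζu : IsUnit (f ζ) := (hζ.isUnit hn0.ne').map f
  set u : (𝓞 K ⧸ I)ˣ := hζu.unit with hudef
  have hu_coe : (u : 𝓞 K ⧸ I) = f ζ := hζu.unit_spec
  have hval : ∀ c : ℕ, f (ζ ^ c) = ((u ^ c : (𝓞 K ⧸ I)ˣ) : 𝓞 K ⧸ I) := fun c => by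
    rw [map_pow, Units.val_pow_eq_pow_val, hu_coe]
  -- u has order q^i
  have hmemI : (1 - ζ ^ q ^ i) ∈ I := Ideal.subset_span rfl
  have huq : u ^ q ^ i = 1 := by
    refine Units.ext ?_
    have h0 : f (1 - ζ ^ q ^ i) = 0 := Ideal.Quotient.eq_zero_iff_mem.2 hmemI
    rw [map_sub, map_one, sub_eq_zero] at h0
    rw [Units.val_pow_eq_pow_val, hu_coe, Units.val_one, ← map_pow]
    exact h0.symm
  have hqpNPP : ∀ {r : ℕ}, r.Prime → ∀ k : ℕ, r ^ k ≠ q * p := by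
    intro r hr k hrk
    have hqr : q = r :=
      (Nat.prime_dvd_prime_iff_eq hq hr).1
        (hq.dvd_of_dvd_pow (hrk ▸ Dvd.intro p rfl : q ∣ r ^ k))
    have hpr : p = r :=
      (Nat.prime_dvd_prime_iff_eq hp hr).1
        (hp.dvd_of_dvd_pow (hrk ▸ Dvd.intro_left q rfl : p ∣ r ^ k))
    exact hpq (hpr.trans hqr.symm)
  have hηunit : IsUnit (1 - ζ ^ q ^ (i - 1)) := by
    have hroot := hη.isRoot_cyclotomic (Nat.mul_pos hq.pos hp.pos)
    have hdvd := Polynomial.sub_dvd_eval_sub 1 (ζ ^ q ^ (i - 1))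
      (Polynomial.cyclotomic (q * p) (𝓞 K))
    rw [Polynomial.IsRoot.def.1 hroot, sub_zero,
      Polynomial.eval_one_cyclotomic_not_prime_pow hqpNPP] at hdvd
    exact isUnit_of_dvd_one hdvd
  have hord : orderOf u = q ^ i := by
    have hdvd : orderOf u ∣ q ^ i := orderOf_dvd_of_pow_eq_one huq
    obtain ⟨t, hti, ht⟩ := (Nat.dvd_prime_pow hq).1 hdvd
    rcases eq_or_lt_of_le hti with rfl | hlt
    · exact ht
    · exfalso
      have h1 : u ^ q ^ (i - 1) = 1 := by
        refine orderOf_dvd_iff_pow_eq_one.1 ?_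
        rw [ht]
        exact pow_dvd_pow q (by omega)
      have h2 : f (ζ ^ q ^ (i - 1)) = 1 := by
        rw [hval, h1, Units.val_one]
      have hmem' : (1 - ζ ^ q ^ (i - 1)) ∈ I := by
        rw [← Ideal.Quotient.eq_zero_iff_mem, map_sub, map_one, h2, sub_self]
      exact hNP (isUnit_of_dvd_unit (Ideal.mem_span_singleton.1 hmem') hηunit)
  -- the key equivalence
  have key : ∀ b b' : ℕ, (ζ ^ b' - ζ ^ b ∈ I ↔ b ≡ b' [MOD q ^ i]) := by
    intro b b'
    rw [← Ideal.Quotient.eq_zero_iff_mem, map_sub, sub_eq_zero, hval, hval,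
      Units.val_inj, pow_eq_pow_iff_modEq, hord]
    exact ⟨Nat.ModEq.symm, Nat.ModEq.symm⟩
  have hE : (1 - (ζ ^ q ^ (i - j)) ^ a) - (1 - (ζ ^ q ^ (i - j)) ^ a') =
      ζ ^ (q ^ (i - j) * a') - ζ ^ (q ^ (i - j) * a) := by
    rw [← pow_mul, ← pow_mul]
    ring
  rw [hE, key]
  have hqi : q ^ i = q ^ (i - j) * q ^ j := by
    rw [← pow_add]
    congr 1
    omega
  rw [hqi]
  exact Nat.ModEq.mul_left_cancel_iff' (pow_ne_zero _ hq.pos.ne')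
end
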